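/- If L ≥ 3 is odd, then the minimum cardinality of a 1-cycle S of the L×L Klein-bottle lattice whose intersection with the seam has odd cardinality is exactly L: the purely horizontal loop through the fixed row y = (L−1)/2 of the reflection y ↦ L−1−y is a 1-cycle of cardinality L crossing the seam exactly once, and no such cycle has fewer than L edges; hence for odd code distance the Klein-bottle code offers no improvement over the toric code. -/

import Mathlib

/-- The second endpoint of the horizontal edge based at `p` in the `L × L` Klein-bottle
lattice: identifying `ZMod L` with `{0, …, L-1}`, we have `φ(x, y) = (x+1, y)` if
`x ≠ L-1` (i.e. `x ≠ -1` in `ZMod L`) and `φ(L-1, y) = (0, L-1-y)` (the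
orientation-reversing identification of the Klein bottle, with `L-1-y = -1-y` in
`ZMod L`). -/
def kleinPhi (L : ℕ) (p : ZMod L × ZMod L) : ZMod L × ZMod L :=
  if p.1 = -1 then (0, -1 - p.2) else (p.1 + 1, p.2)

/-- The endpoints of an edge of the Klein-bottle lattice: the horizontal edge `(p, 0)`
has endpoints `p` and `kleinPhi L p`; the vertical edge `(p, 1)` has endpoints `p` and
`p + (0, 1)`. -/
def kleinEnds (L : ℕ) (e : (ZMod L × ZMod L) × Fin 2) : Set (ZMod L × ZMod L) :=
  if e.2 = 0 then {e.1, kleinPhi L e.1} else {e.1, e.1 + (0, 1)}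

/-- `S` is a 1-cycle of the Klein-bottle lattice: every vertex is an endpoint of an even
number of edges of `S`. -/
def kleinIsCycle (L : ℕ) (S : Set ((ZMod L × ZMod L) × Fin 2)) : Prop :=
  ∀ v : ZMod L × ZMod L, Even {e | e ∈ S ∧ v ∈ kleinEnds L e}.ncard

/-- The seam of the Klein-bottle lattice: the `L` horizontal edges `h(L-1, y)`,
`y ∈ ZMod L` (with `L-1 = -1` in `ZMod L`). -/
def kleinSeam (L : ℕ) : Set ((ZMod L × ZMod L) × Fin 2) :=
  {e | ∃ y : ZMod L, e = ((-1, y), 0)}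

/-- The purely horizontal loop through the row `y = (L-1)/2` (the fixed row of the
reflection `y ↦ L-1-y` when `L` is odd). -/
def kleinMidLoop (L : ℕ) : Set ((ZMod L × ZMod L) × Fin 2) :=
  {e | ∃ x : ZMod L, e = ((x, (((L - 1) / 2 : ℕ) : ZMod L)), 0)}

def kleinSnd (L : ℕ) (e : (ZMod L × ZMod L) × Fin 2) : ZMod L × ZMod L :=
  if e.2 = 0 then kleinPhi L e.1 else e.1 + (0, 1)

lemma kleinEnds_eq (L : ℕ) (e : (ZMod L × ZMod L) × Fin 2) :
    kleinEnds L e = {e.1, kleinSnd L e} := by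
  unfold kleinEnds kleinSnd; split <;> rfl

lemma mem_kleinEnds (L : ℕ) (e : (ZMod L × ZMod L) × Fin 2) (v : ZMod L × ZMod L) :
    v ∈ kleinEnds L e ↔ v = e.1 ∨ v = kleinSnd L e := by
  rw [kleinEnds_eq]; simp [Set.mem_insert_iff]

lemma kleinSnd_fst (L : ℕ) (e : (ZMod L × ZMod L) × Fin 2) :
    (kleinSnd L e).1 = e.1.1 + (if e.2 = 0 then 1 else 0) := by
  unfold kleinSnd kleinPhi
  split
  · split
    · simp_all
    · simp_all
  · simp

lemma klein_one_ne_zero {L : ℕ} (hL : 3 ≤ L) : (1 : ZMod L) ≠ 0 := by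
  have : ((1:ℕ) : ZMod L) ≠ 0 := by
    rw [Ne, ZMod.natCast_eq_zero_iff]
    intro h; exact absurd (Nat.le_of_dvd one_pos h) (by omega)
  simpa using this

lemma kleinSnd_ne {L : ℕ} (hL : 3 ≤ L) (e : (ZMod L × ZMod L) × Fin 2) :
    e.1 ≠ kleinSnd L e := by
  intro h
  by_cases h0 : e.2 = 0
  · have := congrArg Prod.fst h
    rw [kleinSnd_fst, if_pos h0, left_eq_add] at this
    exact klein_one_ne_zero hL this
  · have := congrArg Prod.snd h
    unfold kleinSnd at this
    rw [if_neg h0] at this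
    simp only [Prod.snd_add, left_eq_add] at this
    exact klein_one_ne_zero hL this

open Finset in
lemma klein_col_parity {L : ℕ} [NeZero L] (hL : 3 ≤ L) (S : Set ((ZMod L × ZMod L) × Fin 2))
    (hS : kleinIsCycle L S) (a : ZMod L) :
    (((S.toFinite.toFinset).filter (fun e => e.2 = 0 ∧ e.1.1 = a)).card : ZMod 2)
      = (((S.toFinite.toFinset).filter (fun e => e.2 = 0 ∧ e.1.1 = a - 1)).card : ZMod 2) := by
  classical
  set F := S.toFinite.toFinset with hFdef
  -- each vertex has even degree
  have hdeg : ∀ v, ((F.filter (fun e => v ∈ kleinEnds L e)).card : ZMod 2) = 0 := by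
    intro v
    have h1 : {e | e ∈ S ∧ v ∈ kleinEnds L e} = ↑(F.filter (fun e => v ∈ kleinEnds L e)) := by
      ext e; simp [hFdef, Set.Finite.mem_toFinset, Set.mem_setOf_eq]
    have h2 := hS v
    rw [h1, Set.ncard_coe_finset] at h2
    rw [ZMod.natCast_eq_zero_iff]
    exact h2.two_dvd
  -- double counting
  have hswap : (0 : ZMod 2)
      = ∑ e ∈ F, ∑ v ∈ univ.filter (fun v : ZMod L × ZMod L => v.1 = a),
          (if v ∈ kleinEnds L e then (1 : ZMod 2) else 0) := by
    rw [Finset.sum_comm]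
    have : ∀ v : ZMod L × ZMod L,
        (∑ e ∈ F, if v ∈ kleinEnds L e then (1 : ZMod 2) else 0) = 0 := by
      intro v
      rw [Finset.sum_boole]
      exact hdeg v
    rw [Finset.sum_congr rfl (fun v _ => this v), Finset.sum_const, smul_zero]
  -- per-edge count
  have hedge : ∀ e : (ZMod L × ZMod L) × Fin 2,
      (∑ v ∈ univ.filter (fun v : ZMod L × ZMod L => v.1 = a),
          (if v ∈ kleinEnds L e then (1 : ZMod 2) else 0))
        = (if e.2 = 0 ∧ (e.1.1 = a ∨ e.1.1 = a - 1) then 1 else 0) := by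
    intro e
    have hne := kleinSnd_ne hL e
    have h1 : ∀ v : ZMod L × ZMod L, (v ∈ kleinEnds L e) = (v ∈ ({e.1, kleinSnd L e} : Finset _)) := by
      intro v
      simp [mem_kleinEnds, Finset.mem_insert]
    calc (∑ v ∈ univ.filter (fun v : ZMod L × ZMod L => v.1 = a),
          (if v ∈ kleinEnds L e then (1 : ZMod 2) else 0))
        = ∑ v ∈ univ.filter (fun v : ZMod L × ZMod L => v.1 = a),
          (if v ∈ ({e.1, kleinSnd L e} : Finset _) then (1 : ZMod 2) else 0) := by
          exact Finset.sum_congr rfl (fun v _ => by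
            simp only [mem_kleinEnds, Finset.mem_insert, Finset.mem_singleton])
      _ = ∑ v ∈ univ.filter (fun v : ZMod L × ZMod L => v.1 = a) ∩ {e.1, kleinSnd L e},
          (1 : ZMod 2) := Finset.sum_ite_mem _ _ _
      _ = ∑ v ∈ ({e.1, kleinSnd L e} : Finset _).filter (fun v => v.1 = a), (1 : ZMod 2) := by
          congr 1
          ext v
          simp [Finset.mem_filter, Finset.mem_inter, and_comm]
      _ = ∑ v ∈ ({e.1, kleinSnd L e} : Finset _), (if v.1 = a then (1 : ZMod 2) else 0) := by
          rw [Finset.sum_filter]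
      _ = (if e.1.1 = a then (1:ZMod 2) else 0) + (if (kleinSnd L e).1 = a then (1:ZMod 2) else 0) :=
          Finset.sum_pair hne
      _ = (if e.2 = 0 ∧ (e.1.1 = a ∨ e.1.1 = a - 1) then 1 else 0) := by
          rw [kleinSnd_fst]
          by_cases h0 : e.2 = 0
          · have hx : (e.1.1 = a - 1) ↔ (e.1.1 + 1 = a) := eq_sub_iff_add_eq
            have hexcl : ¬(e.1.1 = a ∧ e.1.1 + 1 = a) := by
              rintro ⟨hh1, hh2⟩
              rw [hh1, add_eq_left] at hh2
              exact klein_one_ne_zero hL hh2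
            by_cases ha1 : e.1.1 = a <;> by_cases ha2 : e.1.1 + 1 = a
            · exact absurd ⟨ha1, ha2⟩ hexcl
            · simp [ha1, ha2, h0, hx] <;> exact klein_one_ne_zero hL
            · simp [ha1, ha2, h0, hx] <;> exact klein_one_ne_zero hL
            · simp [ha1, ha2, h0, hx] <;> exact klein_one_ne_zero hL
          · rw [if_neg h0, add_zero, CharTwo.add_self_eq_zero,
              if_neg (fun h => h0 h.1)]
  have hfinal : (0 : ZMod 2)
      = ((F.filter (fun e => e.2 = 0 ∧ e.1.1 = a)).card : ZMod 2)
        + ((F.filter (fun e => e.2 = 0 ∧ e.1.1 = a - 1)).card : ZMod 2) := by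
    have h1 : (0 : ZMod 2)
        = ((F.filter (fun e => e.2 = 0 ∧ (e.1.1 = a ∨ e.1.1 = a - 1))).card : ZMod 2) :=
      hswap.trans ((Finset.sum_congr rfl (fun e _ => hedge e)).trans (Finset.sum_boole _ _))
    have hsplit : F.filter (fun e => e.2 = 0 ∧ (e.1.1 = a ∨ e.1.1 = a - 1))
        = F.filter (fun e => e.2 = 0 ∧ e.1.1 = a) ∪ F.filter (fun e => e.2 = 0 ∧ e.1.1 = a - 1) := by
      rw [← Finset.filter_or]
      exact Finset.filter_congr (fun e _ => by tauto)
    have hdisj : Disjoint (F.filter (fun e => e.2 = 0 ∧ e.1.1 = a))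
        (F.filter (fun e => e.2 = 0 ∧ e.1.1 = a - 1)) := by
      rw [Finset.disjoint_filter]
      rintro e _ ⟨h0, hc1⟩ ⟨_, hc2⟩
      rw [hc1, eq_sub_iff_add_eq, add_eq_left] at hc2
      exact klein_one_ne_zero hL hc2
    rw [hsplit, Finset.card_union_of_disjoint hdisj, Nat.cast_add] at h1
    exact h1
  have h := eq_neg_of_add_eq_zero_left hfinal.symm
  rw [CharTwo.neg_eq] at h
  exact h

open Finset in
lemma klein_lower {L : ℕ} [NeZero L] (hL : 3 ≤ L) (S : Set ((ZMod L × ZMod L) × Fin 2))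
    (hS : kleinIsCycle L S) (hodd : Odd ((S ∩ kleinSeam L).ncard)) : L ≤ S.ncard := by
  classical
  set F := S.toFinite.toFinset with hFdef
  have hcard : S.ncard = F.card := Set.ncard_eq_toFinset_card S S.toFinite
  set H : ZMod L → Finset ((ZMod L × ZMod L) × Fin 2) :=
    fun a => F.filter (fun e => e.2 = 0 ∧ e.1.1 = a) with hHdef
  -- the seam intersection is H (-1)
  have hseam : S ∩ kleinSeam L = ↑(H (-1)) := by
    ext e
    simp only [Set.mem_inter_iff, kleinSeam, Set.mem_setOf_eq, hHdef, Finset.coe_filter,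
      Set.Finite.mem_toFinset, Set.mem_setOf_eq, hFdef]
    constructor
    · rintro ⟨heS, y, rfl⟩; exact ⟨heS, rfl, rfl⟩
    · rintro ⟨heS, h2, h1⟩
      refine ⟨heS, e.1.2, ?_⟩
      ext <;> simp [h1, h2]
  have hoddm1 : Odd (H (-1)).card := by
    rwa [hseam, Set.ncard_coe_finset] at hodd
  -- all columns have odd count
  have hodds : ∀ n : ℕ, Odd (H (-1 - (n : ZMod L))).card := by
    intro n
    induction n with
    | zero => simpa using hoddm1
    | succ m ih =>
      have hpar := klein_col_parity hL S hS (-1 - (m : ZMod L))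
      have hMOD := (ZMod.natCast_eq_natCast_iff _ _ _).mp hpar
      have harg : (-1 - (m : ZMod L)) - 1 = -1 - ((m + 1 : ℕ) : ZMod L) := by
        push_cast; ring
      rw [harg] at hMOD
      rw [Nat.odd_iff, ← hMOD]
      exact Nat.odd_iff.mp ih
  have hodda : ∀ a : ZMod L, Odd (H a).card := by
    intro a
    have h := hodds (-1 - a).val
    rwa [show -1 - (((-1 - a).val : ℕ) : ZMod L) = a by
      simp [ZMod.natCast_val, ZMod.cast_id]] at h
  have hne : ∀ a : ZMod L, (H a).Nonempty := fun a => Finset.card_pos.mp (hodda a).pos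
  choose f hf using hne
  have hinj : Set.InjOn f ↑(Finset.univ : Finset (ZMod L)) := by
    intro a _ b _ hab
    have ha := (Finset.mem_filter.mp (hf a)).2.2
    have hb := (Finset.mem_filter.mp (hf b)).2.2
    rw [← ha, ← hb, hab]
  calc L = Fintype.card (ZMod L) := (ZMod.card L).symm
    _ = (Finset.univ : Finset (ZMod L)).card := (Finset.card_univ).symm
    _ ≤ F.card := Finset.card_le_card_of_injOn f
        (fun a _ => (Finset.mem_filter.mp (hf a)).1) hinj
    _ = S.ncard := hcard.symm

lemma klein_mid_fixed {L : ℕ} (hL : 3 ≤ L) (hLodd : Odd L) :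
    (-1 : ZMod L) - (((L - 1) / 2 : ℕ) : ZMod L) = (((L - 1) / 2 : ℕ) : ZMod L) := by
  rw [sub_eq_iff_eq_add]
  have h1 : (((L - 1) / 2 : ℕ) : ZMod L) + (((L - 1) / 2 : ℕ) : ZMod L)
      = ((L - 1 : ℕ) : ZMod L) := by
    rw [← Nat.cast_add]
    congr 1
    obtain ⟨m, rfl⟩ := hLodd
    omega
  have h2 : ((L - 1 : ℕ) : ZMod L) = -1 := by
    rw [Nat.cast_sub (by omega), ZMod.natCast_self, Nat.cast_one, zero_sub]
  rw [h1, h2]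

lemma klein_row_ends {L : ℕ} (hL : 3 ≤ L)
    (hmid : (-1 : ZMod L) - (((L - 1) / 2 : ℕ) : ZMod L) = (((L - 1) / 2 : ℕ) : ZMod L))
    (x : ZMod L) :
    kleinEnds L ((x, (((L - 1) / 2 : ℕ) : ZMod L)), 0)
      = {(x, (((L - 1) / 2 : ℕ) : ZMod L)), (x + 1, (((L - 1) / 2 : ℕ) : ZMod L))} := by
  rw [kleinEnds_eq]
  have : kleinSnd L ((x, (((L - 1) / 2 : ℕ) : ZMod L)), 0)
      = (x + 1, (((L - 1) / 2 : ℕ) : ZMod L)) := by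
    unfold kleinSnd kleinPhi
    simp only [if_pos rfl]
    by_cases hx : x = -1
    · simp [hx, hmid]
    · simp [hx]
  rw [this]

lemma klein_midLoop_cycle {L : ℕ} (hL : 3 ≤ L) (hLodd : Odd L) :
    kleinIsCycle L (kleinMidLoop L) := by
  intro v
  have hmid := klein_mid_fixed hL hLodd
  set c : ZMod L := (((L - 1) / 2 : ℕ) : ZMod L) with hc
  by_cases hv : v.2 = c
  · have hset : {e | e ∈ kleinMidLoop L ∧ v ∈ kleinEnds L e}
        = {((v.1, c), 0), ((v.1 - 1, c), 0)} := by
      ext e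
      simp only [kleinMidLoop, Set.mem_setOf_eq, Set.mem_insert_iff, Set.mem_singleton_iff]
      constructor
      · rintro ⟨⟨x, rfl⟩, hve⟩
        rw [klein_row_ends hL hmid] at hve
        rcases hve with h | h
        · left
          have : x = v.1 := by rw [h]
          rw [this]
        · right
          have : x = v.1 - 1 := by rw [h]; ring
          rw [this]
      · rintro (rfl | rfl)
        · refine ⟨⟨v.1, rfl⟩, ?_⟩
          rw [klein_row_ends hL hmid, ← hc]
          left
          rw [← hv]
        · refine ⟨⟨v.1 - 1, rfl⟩, ?_⟩
          rw [klein_row_ends hL hmid, ← hc]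
          right
          rw [Set.mem_singleton_iff, sub_add_cancel, ← hv]
    rw [hset, Set.ncard_pair]
    · exact even_two
    · intro h
      have h1 := congrArg (fun p => p.1.1) h
      simp only at h1
      have : (1 : ZMod L) = 0 := by
        have := sub_eq_self.mp h1.symm
        exact this
      exact klein_one_ne_zero hL this
  · have hset : {e | e ∈ kleinMidLoop L ∧ v ∈ kleinEnds L e} = ∅ := by
      ext e
      simp only [Set.mem_setOf_eq, Set.mem_empty_iff_false, iff_false, not_and]
      rintro ⟨x, rfl⟩ hve
      rw [klein_row_ends hL hmid] at hve
      rcases hve with h | h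
      · exact hv (congrArg Prod.snd h)
      · exact hv (congrArg Prod.snd h)
    rw [hset, Set.ncard_empty]
    exact Even.zero

lemma klein_midLoop_card {L : ℕ} [NeZero L] : (kleinMidLoop L).ncard = L := by
  classical
  set c : ZMod L := (((L - 1) / 2 : ℕ) : ZMod L) with hc
  have : kleinMidLoop L
      = ↑(Finset.univ.image (fun x : ZMod L => ((x, c), (0 : Fin 2)))) := by
    ext e
    simp [kleinMidLoop, eq_comm, hc]
  rw [this, Set.ncard_coe_finset,
    Finset.card_image_of_injective _ (fun a b h => by simpa using h),
    Finset.card_univ, ZMod.card]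

lemma klein_midLoop_seam {L : ℕ} (hL : 3 ≤ L) :
    (kleinMidLoop L ∩ kleinSeam L).ncard = 1 := by
  set c : ZMod L := (((L - 1) / 2 : ℕ) : ZMod L) with hc
  have : kleinMidLoop L ∩ kleinSeam L = {((-1, c), 0)} := by
    ext e
    simp only [Set.mem_inter_iff, kleinMidLoop, kleinSeam, Set.mem_setOf_eq,
      Set.mem_singleton_iff]
    constructor
    · rintro ⟨⟨x, rfl⟩, y, he⟩
      simp only [Prod.mk.injEq] at he
      obtain ⟨⟨h1, h2⟩, -⟩ := he
      rw [h1]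
    · rintro rfl
      exact ⟨⟨-1, rfl⟩, c, rfl⟩
  rw [this, Set.ncard_singleton]


/-- For odd `L ≥ 3`, the minimum cardinality of a 1-cycle of the `L × L` Klein-bottle
lattice crossing the seam an odd number of times is exactly `L`: the horizontal loop
through the fixed row `y = (L-1)/2` is a 1-cycle of cardinality `L` crossing the seam
exactly once, and no such cycle has fewer than `L` edges; hence for odd code distance the
Klein-bottle code offers no improvement over the toric code. -/
theorem klein_odd_distance (L : ℕ) (hL : 3 ≤ L) (hLodd : Odd L) :
    IsLeast {k : ℕ | ∃ S : Set ((ZMod L × ZMod L) × Fin 2),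
        kleinIsCycle L S ∧ Odd ((S ∩ kleinSeam L).ncard) ∧ S.ncard = k} L ∧
    kleinIsCycle L (kleinMidLoop L) ∧ (kleinMidLoop L).ncard = L ∧
    (kleinMidLoop L ∩ kleinSeam L).ncard = 1 := by
  haveI : NeZero L := ⟨by omega⟩
  have hmidcycle := klein_midLoop_cycle hL hLodd
  have hcard := klein_midLoop_card (L := L)
  have hseam1 := klein_midLoop_seam (L := L) hL
  refine ⟨⟨⟨kleinMidLoop L, hmidcycle, ?_, hcard⟩, ?_⟩, hmidcycle, hcard, hseam1⟩
  · rw [hseam1]; exact odd_one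
  · rintro k ⟨S, h1, h2, rfl⟩
    exact klein_lower hL S h1 h2
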